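/- For every integer s ≥ 1, the graph H_s has s² vertices and τ_max(H_s) = 2s − 2 = 2√(s²) − 2. -/

import Mathlib

/-- `W` is a vertex cover of `G`: it meets every edge. -/
def IsVC {V : Type*} (G : SimpleGraph V) (W : Finset V) : Prop :=
  ∀ ⦃u v : V⦄, G.Adj u v → u ∈ W ∨ v ∈ W

/-- `W` is a minimal vertex cover of `G`. -/
def IsMinVC {V : Type*} (G : SimpleGraph V) (W : Finset V) : Prop :=
  IsVC G W ∧ ∀ W' : Finset V, W' ⊂ W → ¬ IsVC G W'

/-- The maximum size of a minimal vertex cover of `G`. -/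
noncomputable def tauMax {V : Type*} (G : SimpleGraph V) : ℕ :=
  sSup {k : ℕ | ∃ W : Finset V, IsMinVC G W ∧ W.card = k}
/-- The graph `H s`: a clique on the vertices `(i, 0)`, with each clique vertex `(i, 0)`
additionally joined to the `s - 1` pendant vertices `(i, j)` for `j ≠ 0`. -/
def Hgraph (s : ℕ) : SimpleGraph (Fin s × Fin s) where
  Adj u v := u ≠ v ∧ ((u.2.val = 0 ∧ v.2.val = 0) ∨ (u.2.val = 0 ∧ u.1 = v.1) ∨
    (v.2.val = 0 ∧ u.1 = v.1))
  symm := ⟨by rintro u v ⟨h, h2⟩; exact ⟨h.symm, by aesop⟩⟩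
  loopless := ⟨fun u h => h.1 rfl⟩

namespace HgraphAux

lemma hadj {s : ℕ} {u v : Fin s × Fin s} :
    (Hgraph s).Adj u v ↔ u ≠ v ∧ ((u.2.val = 0 ∧ v.2.val = 0) ∨ (u.2.val = 0 ∧ u.1 = v.1) ∨
      (v.2.val = 0 ∧ u.1 = v.1)) := Iff.rfl

variable {s : ℕ}

/-- The candidate maximal minimal vertex cover: all clique vertices except `(z,z)`,
plus all pendants of `z`. -/
def W0 (z : Fin s) : Finset (Fin s × Fin s) :=
  ((Finset.univ.erase z) ×ˢ ({z} : Finset (Fin s))) ∪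
    (({z} : Finset (Fin s)) ×ˢ (Finset.univ.erase z))

lemma memW0 {z : Fin s} {v : Fin s × Fin s} :
    v ∈ W0 z ↔ (v.1 ≠ z ∧ v.2 = z) ∨ (v.1 = z ∧ v.2 ≠ z) := by
  obtain ⟨a, b⟩ := v
  simp only [W0, Finset.mem_union, Finset.mem_product, Finset.mem_erase, Finset.mem_singleton,
    Finset.mem_univ, and_true, true_and]

lemma eq_z {z a : Fin s} (hz : z.val = 0) (ha : a.val = 0) : a = z :=
  Fin.ext (ha.trans hz.symm)

lemma cardW0 {z : Fin s} : (W0 z).card = 2 * s - 2 := by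
  have hdisj : Disjoint ((Finset.univ.erase z) ×ˢ ({z} : Finset (Fin s)))
      (({z} : Finset (Fin s)) ×ˢ (Finset.univ.erase z)) := by
    rw [Finset.disjoint_left]
    rintro ⟨a, b⟩ h1 h2
    simp only [Finset.mem_product, Finset.mem_erase, Finset.mem_singleton] at h1 h2
    exact h1.1.1 h2.1
  rw [W0, Finset.card_union_of_disjoint hdisj, Finset.card_product, Finset.card_product,
    Finset.card_singleton, Finset.card_erase_of_mem (Finset.mem_univ z), Finset.card_univ,
    Fintype.card_fin]
  omega

lemma lower (z : Fin s) (hz : z.val = 0) :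
    IsMinVC (Hgraph s) (W0 z) := by
  constructor
  · -- vertex cover
    rintro u v ⟨hne, hc⟩
    rcases hc with ⟨h1, h2⟩ | ⟨h1, h2⟩ | ⟨h1, h2⟩
    · have hu2 : u.2 = z := eq_z hz h1
      have hv2 : v.2 = z := eq_z hz h2
      by_cases hu1 : u.1 = z
      · right
        refine memW0.2 (Or.inl ⟨?_, hv2⟩)
        intro hv1
        exact hne (Prod.ext (hu1.trans hv1.symm) (hu2.trans hv2.symm))
      · exact Or.inl (memW0.2 (Or.inl ⟨hu1, hu2⟩))
    · have hu2 : u.2 = z := eq_z hz h1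
      by_cases hu1 : u.1 = z
      · right
        refine memW0.2 (Or.inr ⟨h2 ▸ hu1, ?_⟩)
        intro hv2
        exact hne (Prod.ext h2 (hu2.trans hv2.symm))
      · exact Or.inl (memW0.2 (Or.inl ⟨hu1, hu2⟩))
    · have hv2 : v.2 = z := eq_z hz h1
      by_cases hv1 : v.1 = z
      · left
        refine memW0.2 (Or.inr ⟨h2.trans hv1, ?_⟩)
        intro hu2
        exact hne (Prod.ext h2 (hu2.trans hv2.symm))
      · exact Or.inr (memW0.2 (Or.inl ⟨hv1, hv2⟩))
  · -- minimality
    intro W' hsub hVC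
    obtain ⟨x, hxW0, hxW'⟩ := Finset.exists_of_ssubset hsub
    have hzz : ((z, z) : Fin s × Fin s) ∉ W' := by
      intro h
      have := hsub.1 h
      rcases memW0.1 this with ⟨h1, _⟩ | ⟨_, h2⟩
      · exact h1 rfl
      · exact h2 rfl
    rcases memW0.1 hxW0 with ⟨h1, h2⟩ | ⟨h1, h2⟩
    · -- x = (x.1, z), x.1 ≠ z : edge x -- (z,z) uncovered
      have hadj : (Hgraph s).Adj x (z, z) := by
        refine ⟨fun h => h1 (congrArg Prod.fst h), Or.inl ⟨?_, hz⟩⟩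
        rw [h2]; exact hz
      rcases hVC hadj with h | h
      · exact hxW' h
      · exact hzz h
    · -- x = (z, x.2), x.2 ≠ z : edge (z,z) -- x uncovered
      have hadj : (Hgraph s).Adj (z, z) x := by
        refine ⟨fun h => h2 (congrArg Prod.snd h).symm, Or.inr (Or.inl ⟨hz, h1.symm⟩)⟩
      rcases hVC hadj with h | h
      · exact hzz h
      · exact hxW' h

lemma upper (hs2 : 2 ≤ s) (z : Fin s) (hz : z.val = 0) (W : Finset (Fin s × Fin s))
    (hW : IsMinVC (Hgraph s) W) : W.card ≤ 2 * s - 2 := by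
  by_cases hall : ∀ i : Fin s, (i, z) ∈ W
  · -- all clique vertices in W ⇒ W is contained in the clique
    have hsub : W ⊆ Finset.univ.image (fun i : Fin s => (i, z)) := by
      intro x hx
      simp only [Finset.mem_image, Finset.mem_univ, true_and]
      refine ⟨x.1, ?_⟩
      by_contra hne
      have hx2 : x.2 ≠ z := fun h => hne (by rw [← h])
      refine hW.2 (W.erase x) (Finset.erase_ssubset hx) ?_
      rintro u v ⟨huv, hc⟩
      have key : ∀ w : Fin s × Fin s, w.2.val = 0 → w ∈ W.erase x := by
        intro w hw
        have hw2 : w.2 = z := eq_z hz hw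
        have hwW : w ∈ W := by
          have := hall w.1
          rwa [show (w.1, z) = w from by rw [← hw2]] at this
        exact Finset.mem_erase.2 ⟨fun h => hx2 (h ▸ hw2), hwW⟩
      rcases hc with ⟨h1, _⟩ | ⟨h1, _⟩ | ⟨h1, _⟩
      · exact Or.inl (key u h1)
      · exact Or.inl (key u h1)
      · exact Or.inr (key v h1)
    calc W.card ≤ (Finset.univ.image (fun i : Fin s => (i, z))).card :=
          Finset.card_le_card hsub
      _ ≤ Finset.univ.card := Finset.card_image_le
      _ = s := by rw [Finset.card_univ, Fintype.card_fin]
      _ ≤ 2 * s - 2 := by omega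
  · push_neg at hall
    obtain ⟨i0, hi0⟩ := hall
    have hrest : ∀ i : Fin s, i ≠ i0 → (i, z) ∈ W := by
      intro i hi
      have hadj : (Hgraph s).Adj (i, z) (i0, z) :=
        ⟨fun h => hi (congrArg Prod.fst h), Or.inl ⟨hz, hz⟩⟩
      rcases hW.1 hadj with h | h
      · exact h
      · exact absurd h hi0
    have hsub : W ⊆ ((Finset.univ.erase i0) ×ˢ ({z} : Finset (Fin s))) ∪
        (({i0} : Finset (Fin s)) ×ˢ (Finset.univ.erase z)) := by
      intro x hx
      simp only [Finset.mem_union, Finset.mem_product, Finset.mem_erase, Finset.mem_singleton,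
        Finset.mem_univ, and_true, true_and]
      by_cases hx2 : x.2 = z
      · left
        refine ⟨fun h => hi0 ?_, hx2⟩
        have hxe : ((i0, z) : Fin s × Fin s) = x := by rw [← h, ← hx2]
        exact hxe ▸ hx
      · right
        refine ⟨?_, hx2⟩
        by_contra hx1
        -- x is a pendant of some i ≠ i0 : removable
        refine hW.2 (W.erase x) (Finset.erase_ssubset hx) ?_
        rintro u v h
        obtain ⟨huv, hc⟩ := h
        have hx2v : x.2.val ≠ 0 := fun h => hx2 (eq_z hz h)
        rcases hW.1 ⟨huv, hc⟩ with hu | hv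
        · by_cases hux : u = x
          · subst hux
            rcases hc with ⟨h1, _⟩ | ⟨h1, _⟩ | ⟨h1, h2⟩
            · exact absurd h1 hx2v
            · exact absurd h1 hx2v
            · -- v = (u.1, z) with u.1 ≠ i0
              have hv2 : v.2 = z := eq_z hz h1
              have hvW : v ∈ W := by
                have := hrest v.1 (h2 ▸ hx1)
                rwa [show (v.1, z) = v from by rw [← hv2]] at this
              exact Or.inr (Finset.mem_erase.2 ⟨fun h => hx2 (h ▸ hv2), hvW⟩)
          · exact Or.inl (Finset.mem_erase.2 ⟨hux, hu⟩)
        · by_cases hvx : v = x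
          · subst hvx
            rcases hc with ⟨_, h1⟩ | ⟨h1, h2⟩ | ⟨h1, _⟩
            · exact absurd h1 hx2v
            · -- u = (v.1, z) with v.1 ≠ i0
              have hu2 : u.2 = z := eq_z hz h1
              have huW : u ∈ W := by
                have := hrest u.1 (fun h => hx1 (h2 ▸ h))
                rwa [show (u.1, z) = u from by rw [← hu2]] at this
              exact Or.inl (Finset.mem_erase.2 ⟨fun h => hx2 (h ▸ hu2), huW⟩)
            · exact absurd h1 hx2v
          · exact Or.inr (Finset.mem_erase.2 ⟨hvx, hv⟩)
    calc W.card ≤ _ := Finset.card_le_card hsub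
      _ ≤ _ := Finset.card_union_le _ _
      _ ≤ 2 * s - 2 := by
          simp only [Finset.card_product, Finset.card_singleton,
            Finset.card_erase_of_mem (Finset.mem_univ _), Finset.card_univ, Fintype.card_fin]
          omega

end HgraphAux

theorem stmt_6 (s : ℕ) (hs : 1 ≤ s) :
    Fintype.card (Fin s × Fin s) = s ^ 2 ∧
    tauMax (Hgraph s) = 2 * s - 2 ∧
    ((2 * s - 2 : ℕ) : ℝ) = 2 * Real.sqrt ((s : ℝ) ^ 2) - 2 := by
  refine ⟨by simp [Fintype.card_prod, sq], ?_, ?_⟩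
  · rcases eq_or_lt_of_le hs with h1 | hs2
    · -- s = 1 : the graph has no edges and the unique minimal cover is ∅
      subst h1
      have hnoedge : ∀ u v : Fin 1 × Fin 1, ¬ (Hgraph 1).Adj u v := by
        rintro u v ⟨hne, _⟩
        exact hne (Prod.ext (Fin.ext (by omega)) (Fin.ext (by omega)))
      have hempty : IsVC (Hgraph 1) ∅ := fun u v h => absurd h (hnoedge u v)
      have hmem : (0 : ℕ) ∈ {k : ℕ | ∃ W : Finset (Fin 1 × Fin 1), IsMinVC (Hgraph 1) W ∧
          W.card = k} :=
        ⟨∅, ⟨hempty, fun W' h _ => (Finset.not_ssubset_empty W') h⟩, Finset.card_empty⟩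
      have hle : tauMax (Hgraph 1) ≤ 0 := by
        apply csSup_le ⟨0, hmem⟩
        rintro k ⟨W, hW, rfl⟩
        rcases Finset.eq_empty_or_nonempty W with rfl | hne
        · simp
        · exact absurd hempty (hW.2 ∅ (Finset.empty_ssubset.2 hne))
      omega
    · have hs2 : 2 ≤ s := hs2
      have hs0 : 0 < s := by omega
      set z : Fin s := ⟨0, hs0⟩ with hzdef
      have hz : z.val = 0 := rfl
      have hmem : (2 * s - 2 : ℕ) ∈ {k : ℕ | ∃ W : Finset (Fin s × Fin s),
          IsMinVC (Hgraph s) W ∧ W.card = k} :=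
        ⟨HgraphAux.W0 z, HgraphAux.lower z hz, HgraphAux.cardW0⟩
      have hbdd : ∀ k ∈ {k : ℕ | ∃ W : Finset (Fin s × Fin s),
          IsMinVC (Hgraph s) W ∧ W.card = k}, k ≤ 2 * s - 2 := by
        rintro k ⟨W, hW, rfl⟩
        exact HgraphAux.upper hs2 z hz W hW
      exact le_antisymm (csSup_le ⟨_, hmem⟩ hbdd) (le_csSup ⟨_, hbdd⟩ hmem)
  · have h1 : Real.sqrt ((s : ℝ) ^ 2) = s := Real.sqrt_sq (by positivity)
    rw [h1, Nat.cast_sub (by omega)]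
    push_cast
    ring
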